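/- Let (S,T) be a medium and let m and n be two concise messages transforming a state S. Then Sm = Sn if and only if C(m) = C(n). -/

import Mathlib

open scoped Classical symmDiff

universe u

namespace Media

variable {S : Type u}

/-- The state obtained by applying the message (string of tokens) `m` to the state `s`. -/
def apply (s : S) (m : List (S → S)) : S :=
  m.foldl (fun x τ => τ x) s

/-- The sequence of states `S₀ = s, S₁, …, Sₙ` produced by the message `m` from the state `s`. -/
def produced (s : S) (m : List (S → S)) : List S :=
  m.scanl (fun x τ => τ x) s

/-- `τ'` is a reverse of the token `τ`. -/
def IsReverse (τ τ' : S → S) : Prop :=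
  ∀ P Q : S, P ≠ Q → (τ P = Q ↔ τ' Q = P)

/-- The message `m` is stepwise effective for the state `s`. -/
def StepwiseEffective (s : S) (m : List (S → S)) : Prop :=
  List.Chain' (· ≠ ·) (produced s m)

/-- The message `m` is consistent: it does not contain both a token and its reverse. -/
def Consistent (m : List (S → S)) : Prop :=
  ∀ τ ∈ m, ∀ τ' ∈ m, ¬ IsReverse τ τ'

/-- The message `m` is concise for the state `s`. -/
def Concise (s : S) (m : List (S → S)) : Prop :=
  StepwiseEffective s m ∧ Consistent m ∧ m.Nodup

/-- The message `m` is vacuous: its indices can be partitioned into pairs of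
mutually reverse tokens. -/
def Vacuous (m : List (S → S)) : Prop :=
  ∃ f : Fin m.length → Fin m.length, Function.Involutive f ∧
    (∀ i, f i ≠ i) ∧ ∀ i, IsReverse (m.get i) (m.get (f i))

/-- The message `m` is closed for the state `s`. -/
def Closed (s : S) (m : List (S → S)) : Prop :=
  StepwiseEffective s m ∧ apply s m = s

/-- `(S, T)` is a medium: a token system satisfying axioms [M1] and [M2]. -/
def IsMedium (T : Set (S → S)) : Prop :=
  (∃ a b : S, a ≠ b) ∧ T.Nonempty ∧ (∀ τ ∈ T, τ ≠ id) ∧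
  (∀ P Q : S, P ≠ Q →
    ∃ m : List (S → S), (∀ τ ∈ m, τ ∈ T) ∧ Concise P m ∧ apply P m = Q) ∧
  (∀ (P : S) (m : List (S → S)), (∀ τ ∈ m, τ ∈ T) → Closed P m → Vacuous m)

end Media

open Media

namespace Media
variable {S : Type u}

-- basic lemmas
@[simp] lemma apply_nil (s : S) : apply s ([] : List (S → S)) = s := rfl
@[simp] lemma apply_cons (s : S) (τ : S → S) (m : List (S → S)) :
    apply s (τ :: m) = apply (τ s) m := rfl
lemma apply_append (s : S) (m n : List (S → S)) :
    apply s (m ++ n) = apply (apply s m) n := List.foldl_append ..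

@[simp] lemma se_nil (s : S) : StepwiseEffective s ([] : List (S → S)) := by
  simp [StepwiseEffective, produced, List.scanl, List.Chain', List.isChain_singleton]

lemma head?_produced (s : S) (m : List (S → S)) : (produced s m).head? = some s := by
  cases m <;> simp [produced, List.scanl]

lemma se_cons {s : S} {τ : S → S} {m : List (S → S)} :
    StepwiseEffective s (τ :: m) ↔ s ≠ τ s ∧ StepwiseEffective (τ s) m := by
  rw [StepwiseEffective, produced, List.scanl_cons]
  rw [show s :: List.scanl (fun x τ => τ x) (τ s) m = s :: produced (τ s) m from rfl]
  rw [List.Chain', List.isChain_cons, head?_produced]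
  simp [StepwiseEffective, List.Chain']

lemma se_append {s : S} {m n : List (S → S)} :
    StepwiseEffective s (m ++ n) ↔
      StepwiseEffective s m ∧ StepwiseEffective (apply s m) n := by
  induction m generalizing s with
  | nil => simp
  | cons τ m ih => simp [se_cons, ih, and_assoc]

lemma IsReverse.symm {τ τ' : S → S} (h : IsReverse τ τ') : IsReverse τ' τ := by
  intro P Q hPQ
  have := h Q P hPQ.symm
  tauto

lemma IsReverse.unique {τ a b : S → S} (ha : IsReverse τ a) (hb : IsReverse τ b) : a = b := by
  funext Q
  by_cases h : a Q = Q
  · by_cases h' : b Q = Q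
    · rw [h, h']
    · exfalso
      have h1 : τ (b Q) = Q := (hb (b Q) Q h').mpr rfl
      have h2 : a Q = b Q := (ha (b Q) Q h').mp h1
      exact h' (h2 ▸ h)
  · have h1 : τ (a Q) = Q := (ha (a Q) Q (fun hh => h (hh))).mpr rfl
    have h2 : b Q = a Q := (hb (a Q) Q (fun hh => h hh)).mp h1
    rw [h2]


section Medium
variable {T : Set (S → S)}

lemma exists_reverse (hM : IsMedium T) {τ : S → S} (hτ : τ ∈ T) :
    ∃ τ' ∈ T, IsReverse τ τ' := by
  obtain ⟨-, -, hid, hM1, hM2⟩ := hM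
  have hne : τ ≠ id := hid τ hτ
  have : ∃ P : S, τ P ≠ P := by
    by_contra h
    push_neg at h
    exact hne (funext h)
  obtain ⟨P, hP⟩ := this
  obtain ⟨w, hwT, ⟨hwse, -, -⟩, hwap⟩ := hM1 (τ P) P hP
  have hclosed : Closed P (τ :: w) := by
    refine ⟨se_cons.mpr ⟨Ne.symm hP, hwse⟩, ?_⟩
    simpa using hwap
  have hvac := hM2 P (τ :: w) (by
    intro σ hσ
    rcases List.mem_cons.mp hσ with h | h
    · exact h ▸ hτ
    · exact hwT σ h) hclosed
  obtain ⟨f, hinv, hne', hrev⟩ := hvac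
  refine ⟨(τ :: w).get (f ⟨0, by simp⟩), ?_, ?_⟩
  · have hmem : (τ :: w).get (f ⟨0, by simp⟩) ∈ τ :: w := List.get_mem ..
    rcases List.mem_cons.mp hmem with h | h
    · rw [h]; exact hτ
    · exact hwT _ h
  · have := hrev ⟨0, by simp⟩
    simpa using this

/-- a chosen reverse -/
noncomputable def rev (T : Set (S → S)) (τ : S → S) : S → S :=
  if h : ∃ τ' ∈ T, IsReverse τ τ' then h.choose else id

lemma rev_mem (hM : IsMedium T) {τ : S → S} (hτ : τ ∈ T) : rev T τ ∈ T := by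
  rw [rev, dif_pos (exists_reverse hM hτ)]
  exact (exists_reverse hM hτ).choose_spec.1

lemma isReverse_rev (hM : IsMedium T) {τ : S → S} (hτ : τ ∈ T) : IsReverse τ (rev T τ) := by
  rw [rev, dif_pos (exists_reverse hM hτ)]
  exact (exists_reverse hM hτ).choose_spec.2

/-- `x` a reverse of `rev T σ` implies `x = σ`. -/
lemma eq_of_isReverse_rev (hM : IsMedium T) {σ x : S → S} (hσ : σ ∈ T)
    (h : IsReverse (rev T σ) x) : x = σ :=
  IsReverse.unique h (isReverse_rev hM hσ).symm

/-- the reverse of a message -/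
noncomputable def mrev (T : Set (S → S)) (m : List (S → S)) : List (S → S) :=
  (m.map (rev T)).reverse

@[simp] lemma mrev_length (m : List (S → S)) : (mrev T m).length = m.length := by
  simp [mrev]

lemma mem_mrev {m : List (S → S)} {τ : S → S} :
    τ ∈ mrev T m ↔ ∃ σ ∈ m, rev T σ = τ := by
  simp [mrev]

lemma mrev_tokens (hM : IsMedium T) {m : List (S → S)} (hm : ∀ τ ∈ m, τ ∈ T) :
    ∀ τ ∈ mrev T m, τ ∈ T := by
  intro τ hτ
  obtain ⟨σ, hσ, rfl⟩ := mem_mrev.mp hτ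
  exact rev_mem hM (hm σ hσ)

lemma se_apply_mrev (hM : IsMedium T) {m : List (S → S)} (hm : ∀ τ ∈ m, τ ∈ T)
    {s : S} (hse : StepwiseEffective s m) :
    StepwiseEffective (apply s m) (mrev T m) ∧ apply (apply s m) (mrev T m) = s := by
  induction m generalizing s with
  | nil => simp [mrev]
  | cons τ m ih =>
    obtain ⟨hne, hse'⟩ := se_cons.mp hse
    have hτT : τ ∈ T := hm τ (List.mem_cons_self ..)
    obtain ⟨ih1, ih2⟩ := ih (fun σ hσ => hm σ (List.mem_cons_of_mem _ hσ)) hse'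
    have hms : mrev T (τ :: m) = mrev T m ++ [rev T τ] := by simp [mrev]
    have hrt : rev T τ (τ s) = s := ((isReverse_rev hM hτT) s (τ s) hne).mp rfl
    constructor
    · rw [show apply s (τ :: m) = apply (τ s) m from rfl, hms, se_append, ih2]
      refine ⟨ih1, ?_⟩
      rw [se_cons]
      refine ⟨?_, se_nil _⟩
      rw [hrt]
      exact hne.symm
    · rw [show apply s (τ :: m) = apply (τ s) m from rfl, hms, apply_append, ih2]
      simpa using hrt

lemma rev_injOn (hM : IsMedium T) {σ τ : S → S} (hσ : σ ∈ T) (hτ : τ ∈ T)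
    (h : rev T σ = rev T τ) : σ = τ := by
  have h1 : IsReverse (rev T σ) σ := (isReverse_rev hM hσ).symm
  have h2 : IsReverse (rev T σ) τ := h ▸ (isReverse_rev hM hτ).symm
  exact h1.unique h2

lemma nodup_mrev (hM : IsMedium T) {m : List (S → S)} (hm : ∀ τ ∈ m, τ ∈ T)
    (hnd : m.Nodup) : (mrev T m).Nodup := by
  rw [mrev, List.nodup_reverse]
  exact hnd.map_on (fun σ hσ τ hτ h => rev_injOn hM (hm σ hσ) (hm τ hτ) h)

lemma consistent_mrev (hM : IsMedium T) {m : List (S → S)} (hm : ∀ τ ∈ m, τ ∈ T)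
    (hc : Consistent m) : Consistent (mrev T m) := by
  intro a ha b hb hab
  obtain ⟨σ, hσ, rfl⟩ := mem_mrev.mp ha
  obtain ⟨τ, hτ, rfl⟩ := mem_mrev.mp hb
  have : rev T τ = σ := eq_of_isReverse_rev hM (hm σ hσ) hab
  have h2 : IsReverse τ σ := this ▸ isReverse_rev hM (hm τ hτ)
  exact hc τ hτ σ hσ h2


lemma getElem_congr'' {α : Type u} (l : List α) (x y : ℕ) (h : x = y)
    (hx : x < l.length) (hy : y < l.length) : l[x]'hx = l[y]'hy := by
  subst h; rfl

lemma vacuous_append {a b : List (S → S)} (hv : Vacuous (a ++ b))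
    (hca : Consistent a) (hcb : Consistent b) :
    (∀ τ ∈ a, ∃ σ ∈ b, IsReverse τ σ) ∧ (∀ σ ∈ b, ∃ τ ∈ a, IsReverse σ τ) := by
  obtain ⟨f, hinv, hfne, hrev⟩ := hv
  have hmemM : ∀ (i : Fin (a ++ b).length), i.val < a.length → (a ++ b).get i ∈ a := by
    intro i hi
    rw [List.get_eq_getElem, List.getElem_append_left hi]
    exact List.getElem_mem _
  have hmemN : ∀ (i : Fin (a ++ b).length), a.length ≤ i.val → (a ++ b).get i ∈ b := by
    intro i hi
    rw [List.get_eq_getElem, List.getElem_append_right hi]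
    exact List.getElem_mem _
  constructor
  · intro τ hτ
    obtain ⟨p, hp⟩ := List.get_of_mem hτ
    have hplt : (p : ℕ) < (a ++ b).length := by
      have := p.isLt; simp only [List.length_append]; omega
    have hgi : (a ++ b).get ⟨p.val, hplt⟩ = τ := by
      rw [List.get_eq_getElem, List.getElem_append_left p.isLt]
      simpa [List.get_eq_getElem] using hp
    have hR := hrev ⟨p.val, hplt⟩
    rw [hgi] at hR
    by_cases hfi : (f ⟨p.val, hplt⟩ : ℕ) < a.length
    · exact absurd hR (hca τ hτ _ (hmemM _ hfi))
    · exact ⟨_, hmemN _ (le_of_not_gt hfi), hR⟩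
  · intro σ hσ
    obtain ⟨p, hp⟩ := List.get_of_mem hσ
    have hplt : a.length + (p : ℕ) < (a ++ b).length := by
      have := p.isLt; simp only [List.length_append]; omega
    have hgi : (a ++ b).get ⟨a.length + p.val, hplt⟩ = σ := by
      rw [List.get_eq_getElem, List.getElem_append_right (by simp)]
      simpa [List.get_eq_getElem, Nat.add_sub_cancel_left] using hp
    have hR := hrev ⟨a.length + p.val, hplt⟩
    rw [hgi] at hR
    by_cases hfi : (f ⟨a.length + p.val, hplt⟩ : ℕ) < a.length
    · exact ⟨_, hmemM _ hfi, hR⟩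
    · exact absurd hR (hcb σ hσ _ (hmemN _ (le_of_not_gt hfi)))

end Medium
end Media

/-- Theorem 8.4: for two concise messages `m` and `n` transforming a state `s`,
`s·m = s·n` if and only if `C(m) = C(n)`. -/
theorem apply_eq_iff_content_eq {S : Type u} {T : Set (S → S)}
    (hM : IsMedium T) (s : S) (m n : List (S → S))
    (hm : ∀ τ ∈ m, τ ∈ T) (hn : ∀ τ ∈ n, τ ∈ T)
    (hmc : Concise s m) (hnc : Concise s n) :
    apply s m = apply s n ↔ {τ | τ ∈ m} = {τ | τ ∈ n} := by
  obtain ⟨hmse, hmcon, hmnd⟩ := hmc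
  obtain ⟨hnse, hncon, hnnd⟩ := hnc
  have hM' : IsMedium T := hM
  obtain ⟨-, -, -, hM1, hM2⟩ := hM
  constructor
  · intro happ
    obtain ⟨hnse', hnap'⟩ := se_apply_mrev hM' hn hnse
    have hclosed : Closed s (m ++ mrev T n) := by
      refine ⟨se_append.mpr ⟨hmse, ?_⟩, ?_⟩
      · rw [happ]; exact hnse'
      · rw [apply_append, happ]; exact hnap'
    have htok : ∀ τ ∈ m ++ mrev T n, τ ∈ T := by
      intro τ hτ
      rcases List.mem_append.mp hτ with h | h
      · exact hm τ h
      · exact mrev_tokens hM' hn τ h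
    have hvac := hM2 s _ htok hclosed
    obtain ⟨h1, h2⟩ := vacuous_append hvac hmcon (consistent_mrev hM' hn hncon)
    ext τ
    simp only [Set.mem_setOf_eq]
    constructor
    · intro hτ
      obtain ⟨x, hx, hR⟩ := h1 τ hτ
      obtain ⟨ρ, hρ, rfl⟩ := mem_mrev.mp hx
      have : τ = ρ := eq_of_isReverse_rev hM' (hn ρ hρ) hR.symm
      rwa [this]
    · intro hτ
      have hx : rev T τ ∈ mrev T n := mem_mrev.mpr ⟨τ, hτ, rfl⟩
      obtain ⟨ρ, hρ, hR⟩ := h2 _ hx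
      have : ρ = τ := eq_of_isReverse_rev hM' (hn τ hτ) hR
      rwa [← this]
  · intro hcont
    have hcont' : ∀ τ : S → S, τ ∈ m ↔ τ ∈ n := fun τ => Set.ext_iff.mp hcont τ
    by_contra hPQ
    obtain ⟨w, hwT, ⟨hwse, hwcon, hwnd⟩, hwap⟩ := hM1 _ _ hPQ
    have hwne : w ≠ [] := by
      intro h; rw [h] at hwap; exact hPQ hwap
    obtain ⟨hnse', hnap'⟩ := se_apply_mrev hM' hn hnse
    set u : List (S → S) := (m ++ w) ++ mrev T n with hu
    have hclosed : Closed s u := by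
      refine ⟨?_, ?_⟩
      · rw [hu, se_append, se_append, apply_append, hwap]
        exact ⟨⟨hmse, hwse⟩, hnse'⟩
      · rw [hu, apply_append, apply_append, hwap]
        exact hnap'
    have htok : ∀ τ ∈ u, τ ∈ T := by
      intro τ hτ
      rcases List.mem_append.mp hτ with h | h
      · rcases List.mem_append.mp h with h' | h'
        · exact hm τ h'
        · exact hwT τ h'
      · exact mrev_tokens hM' hn τ h
    obtain ⟨f, hinv, hfne, hrev⟩ := hM2 s u htok hclosed
    set k := m.length with hk
    set l := w.length with hl
    set r := n.length with hr
    have hul : u.length = k + l + r := by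
      simp only [hu, List.length_append, mrev_length, hk, hl, hr]
      try ring
    have hgetM : ∀ (i : Fin u.length) (h : (i : ℕ) < k), u.get i = m.get ⟨i, h⟩ := by
      intro i h
      have h2 : (i : ℕ) < (m ++ w).length := by simp only [List.length_append]; omega
      have e1 : ((m ++ w) ++ mrev T n)[(i : ℕ)]'(by simpa [hu] using i.isLt) = (m ++ w)[(i : ℕ)]'h2 :=
        List.getElem_append_left h2
      have e2 : (m ++ w)[(i : ℕ)]'h2 = m[(i : ℕ)]'h := List.getElem_append_left h
      exact (List.get_eq_getElem (l := u) (i := i)).trans (e1.trans e2)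
    have hgetW : ∀ (i : Fin u.length) (h1 : k ≤ (i : ℕ)) (h2 : (i : ℕ) < k + l),
        u.get i = w.get ⟨(i : ℕ) - k, by omega⟩ := by
      intro i h1 h2
      have h3 : (i : ℕ) < (m ++ w).length := by simp only [List.length_append]; omega
      have e1 : ((m ++ w) ++ mrev T n)[(i : ℕ)]'(by simpa [hu] using i.isLt) = (m ++ w)[(i : ℕ)]'h3 :=
        List.getElem_append_left h3
      have e2 : (m ++ w)[(i : ℕ)]'h3 = w[(i : ℕ) - m.length]'(by omega) :=
        List.getElem_append_right h1
      exact (List.get_eq_getElem (l := u) (i := i)).trans (e1.trans e2)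
    have hgetN : ∀ (i : Fin u.length) (h1 : k + l ≤ (i : ℕ)),
        u.get i = (mrev T n).get ⟨(i : ℕ) - (k + l), by
          have h1 := i.isLt; have h2 := hul
          have h3 : (mrev T n).length = n.length := mrev_length n
          omega⟩ := by
      intro i h1
      have h3 : (m ++ w).length ≤ (i : ℕ) := by simp only [List.length_append]; omega
      have e1 : ((m ++ w) ++ mrev T n)[(i : ℕ)]'(by simpa [hu] using i.isLt) =
          (mrev T n)[(i : ℕ) - (m ++ w).length]'(by
            have h1 := i.isLt; have h2 := hul
            have h3 : (mrev T n).length = n.length := mrev_length n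
            simp only [List.length_append]; omega) :=
        List.getElem_append_right h3
      refine (List.get_eq_getElem (l := u) (i := i)).trans (e1.trans ?_)
      exact getElem_congr'' _ _ _ (by simp only [List.length_append]; try omega) _ _
    have hmemM : ∀ (i : Fin u.length), (i : ℕ) < k → u.get i ∈ m := by
      intro i h; rw [hgetM i h]; exact List.get_mem ..
    have hmemW : ∀ (i : Fin u.length), k ≤ (i : ℕ) → (i : ℕ) < k + l → u.get i ∈ w := by
      intro i h1 h2; rw [hgetW i h1 h2]; exact List.get_mem ..
    have hmemN : ∀ (i : Fin u.length), k + l ≤ (i : ℕ) → u.get i ∈ mrev T n := by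
      intro i h1; rw [hgetN i h1]; exact List.get_mem ..
    have hndN : (mrev T n).Nodup := nodup_mrev hM' hn hnnd
    have hlpos : 0 < l := by
      rw [hl]; exact List.length_pos_iff.mpr hwne
    have hi0lt : k < u.length := by omega
    set i0 : Fin u.length := ⟨k, hi0lt⟩ with hi0
    set ω := u.get i0 with hω
    have hωw : ω ∈ w := hmemW i0 (Nat.le_refl k) (by show k < k + l; omega)
    set j0 := f i0 with hj0
    have hR0 : IsReverse ω (u.get j0) := hrev i0
    have hj0w : (j0 : ℕ) < k ∨ k + l ≤ (j0 : ℕ) := by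
      by_contra h
      push_neg at h
      exact hwcon ω hωw _ (hmemW j0 h.1 h.2) hR0
    rcases hj0w with hj0m | hj0n
    · -- Case 1 : j0 in m region
      set τ := u.get j0 with hτ
      have hτm : τ ∈ m := hmemM j0 hj0m
      have hτn : τ ∈ n := (hcont' τ).mp hτm
      have hτT : τ ∈ T := hm τ hτm
      have hrevτ : rev T τ ∈ mrev T n := mem_mrev.mpr ⟨τ, hτn, rfl⟩
      obtain ⟨p, hp⟩ := List.get_of_mem hrevτ
      have hi1lt : k + l + (p : ℕ) < u.length := by
        have h1 : (p : ℕ) < n.length := lt_of_lt_of_eq p.isLt (mrev_length n)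
        omega
      set i1 : Fin u.length := ⟨k + l + (p : ℕ), hi1lt⟩ with hi1
      have hgi1 : u.get i1 = rev T τ := by
        refine (hgetN i1 (Nat.le_add_right _ _)).trans (Eq.trans ?_ hp)
        exact congrArg (mrev T n).get (Fin.ext (by
          show k + l + (p : ℕ) - (k + l) = (p : ℕ)
          omega))
      set j1 := f i1 with hj1
      have hR1 : IsReverse (rev T τ) (u.get j1) := by
        have := hrev i1; rwa [hgi1] at this
      have hj1val : u.get j1 = τ := eq_of_isReverse_rev hM' hτT hR1
      have hj1n : (j1 : ℕ) < k + l := by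
        by_contra h
        push_neg at h
        exact consistent_mrev hM' hn hncon _ hrevτ _ (hmemN j1 h) hR1
      by_cases hj1m : (j1 : ℕ) < k
      · have e1 : m.get ⟨(j1 : ℕ), hj1m⟩ = m.get ⟨(j0 : ℕ), hj0m⟩ :=
          (hgetM j1 hj1m).symm.trans ((hj1val.trans hτ).trans (hgetM j0 hj0m))
        have e2 : (⟨(j1 : ℕ), hj1m⟩ : Fin m.length) = ⟨(j0 : ℕ), hj0m⟩ :=
          (hmnd.get_inj_iff).mp e1
        have hv : ((⟨(j1 : ℕ), hj1m⟩ : Fin m.length) : ℕ) = ((⟨(j0 : ℕ), hj0m⟩ : Fin m.length) : ℕ) :=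
          congrArg Fin.val e2
        have e3 : j1 = j0 := Fin.ext hv
        have e4 : i1 = i0 := hinv.injective (by rw [← hj1, ← hj0]; exact e3)
        have e5 : k + l + (p : ℕ) = k := congrArg Fin.val e4
        omega
      · have hτw : τ ∈ w := by
          rw [← hj1val]
          exact hmemW j1 (le_of_not_gt hj1m) hj1n
        exact hwcon ω hωw τ hτw hR0
    · -- Case 2 : j0 in N region
      obtain ⟨σ, hσn, hσeq⟩ := mem_mrev.mp (hmemN j0 hj0n)
      have hσT : σ ∈ T := hn σ hσn
      have hR0' : IsReverse (rev T σ) ω := by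
        rw [hσeq]; exact hR0.symm
      have hωσ : ω = σ := eq_of_isReverse_rev hM' hσT hR0'
      have hωm : ω ∈ m := (hcont' ω).mpr (hωσ ▸ hσn)
      obtain ⟨q, hq⟩ := List.get_of_mem hωm
      have hi2lt : (q : ℕ) < u.length := by have := q.isLt; omega
      set i2 : Fin u.length := ⟨(q : ℕ), hi2lt⟩ with hi2
      have hgi2 : u.get i2 = ω := (hgetM i2 q.isLt).trans hq
      set j2 := f i2 with hj2
      have hR2 : IsReverse ω (u.get j2) := by
        have := hrev i2; rwa [hgi2] at this
      have hj2m : k ≤ (j2 : ℕ) := by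
        by_contra h
        push_neg at h
        exact hmcon ω hωm _ (hmemM j2 h) hR2
      by_cases hj2n : k + l ≤ (j2 : ℕ)
      · have e0 : u.get j2 = u.get j0 := hR2.unique hR0
        have e1 := (hgetN j2 hj2n).symm.trans (e0.trans (hgetN j0 hj0n))
        have e2 := (hndN.get_inj_iff).mp e1
        have e3 : j2 = j0 := by
          have h5 : (j2 : ℕ) - (k + l) = (j0 : ℕ) - (k + l) := congrArg Fin.val e2
          exact Fin.ext (by omega)
        have e4 : i2 = i0 := hinv.injective (by rw [← hj2, ← hj0]; exact e3)
        have e5 : (q : ℕ) = k := congrArg Fin.val e4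
        have := q.isLt
        omega
      · push_neg at hj2n
        exact hwcon ω hωw _ (hmemW j2 hj2m hj2n) hR2
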